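/- There exists a set B ⊆ ℝ² of Lebesgue measure zero that contains a circle centered at every point of a straight line: for every t ∈ ℝ there exists r > 0 such that the circle of radius r centered at the point (t, 0) is contained in B. (Talagrand's example.) -/

import Mathlib

open MeasureTheory Metric

namespace Talagrand

/-! ### Slope enumeration and accuracy parameters -/

/-- Slope used in round `r` (round `0` is the trivial starting round). -/
noncomputable def sl : ℕ → ℝ
  | 0 => 0
  | r + 1 => ((Denumerable.ofNat ℚ (Nat.unpair r).1 : ℚ) : ℝ)

/-- Accuracy of round `r+1`. -/
noncomputable def eps (r : ℕ) : ℝ := 1 / (((Nat.unpair r).2 : ℝ) + 1)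

lemma eps_pos (r : ℕ) : 0 < eps r := by
  have : (0:ℝ) < ((Nat.unpair r).2 : ℝ) + 1 := by positivity
  exact div_pos one_pos this

/-- Slope bound for the step from round `r` to round `r+1`. -/
noncomputable def AA (r : ℕ) : ℝ := |sl (r + 1)| + |sl r| + 1

lemma AA_pos (r : ℕ) : 0 < AA r := by
  have h1 : (0:ℝ) ≤ |sl (r+1)| := abs_nonneg _
  have h2 : (0:ℝ) ≤ |sl r| := abs_nonneg _
  unfold AA; linarith

noncomputable def Mstep (r : ℕ) (p : ℕ × ℝ) : ℕ :=
  max p.1 (Nat.clog 2 ⌈4 * AA r / (p.2 / 4)⌉₊)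

/-- `par r = (M r, δ' r)`: dyadic piece exponent and tube thickness after round `r`. -/
noncomputable def par : ℕ → ℕ × ℝ
  | 0 => (0, 1)
  | r + 1 =>
      (Mstep r (par r),
        min (eps r * ((2:ℝ) ^ Mstep r (par r))⁻¹) ((par r).2 / 4))

noncomputable def MM (r : ℕ) : ℕ := (par r).1
noncomputable def dl' (r : ℕ) : ℝ := (par r).2
noncomputable def dl (r : ℕ) : ℝ := dl' r / 4
noncomputable def ww (r : ℕ) : ℝ := ((2:ℝ) ^ MM r)⁻¹

lemma ww_pos (r : ℕ) : 0 < ww r := by unfold ww; positivity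

lemma two_pow_MM_mul_ww (r : ℕ) : (2:ℝ) ^ MM r * ww r = 1 := by
  unfold ww; field_simp

lemma par_succ (r : ℕ) : par (r + 1) =
    (Mstep r (par r), min (eps r * ((2:ℝ) ^ Mstep r (par r))⁻¹) ((par r).2 / 4)) := by
  rw [par]

lemma MM_succ (r : ℕ) : MM (r + 1) = Mstep r (par r) := by
  unfold MM; rw [par_succ]

lemma dl'_succ (r : ℕ) : dl' (r + 1) = min (eps r * ww (r+1)) (dl r) := by
  unfold dl ww MM dl'
  rw [par_succ]

lemma dl'_pos : ∀ r, 0 < dl' r := by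
  intro r
  induction r with
  | zero => unfold dl' par; norm_num
  | succ r ih =>
      rw [dl'_succ]
      have h1 : 0 < eps r * ww (r+1) := mul_pos (eps_pos r) (ww_pos (r+1))
      have h2 : 0 < dl r := by unfold dl; linarith
      exact lt_min h1 h2

lemma dl_pos (r : ℕ) : 0 < dl r := by unfold dl; have := dl'_pos r; linarith

lemma dl'_succ_le_dl (r : ℕ) : dl' (r + 1) ≤ dl r := by
  rw [dl'_succ]; exact min_le_right _ _

lemma dl'_succ_le_epsw (r : ℕ) : dl' (r + 1) ≤ eps r * ww (r+1) := by
  rw [dl'_succ]; exact min_le_left _ _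

lemma MM_le_succ (r : ℕ) : MM r ≤ MM (r + 1) := by
  rw [MM_succ]; exact le_max_left _ _

lemma hww (r : ℕ) : 4 * AA r * ww (r+1) ≤ dl r := by
  have hδ : 0 < dl r := dl_pos r
  have hMM : Nat.clog 2 ⌈4 * AA r / dl r⌉₊ ≤ MM (r+1) := by
    rw [MM_succ]; unfold Mstep
    have : (par r).2 / 4 = dl r := by unfold dl dl'; rfl
    rw [this]
    exact le_max_right _ _
  have h2M : 4 * AA r / dl r ≤ (2:ℝ) ^ MM (r+1) := by
    calc 4 * AA r / dl r ≤ (⌈4 * AA r / dl r⌉₊ : ℝ) := Nat.le_ceil _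
      _ ≤ ((2 ^ (Nat.clog 2 ⌈4 * AA r / dl r⌉₊) : ℕ) : ℝ) := by
          exact_mod_cast Nat.le_pow_clog one_lt_two _
      _ ≤ ((2 ^ MM (r+1) : ℕ) : ℝ) := by
          exact_mod_cast Nat.pow_le_pow_right (by norm_num) hMM
      _ = (2:ℝ) ^ MM (r+1) := by push_cast; ring
  have hpow : (0:ℝ) < (2:ℝ) ^ MM (r+1) := by positivity
  have h4 : 4 * AA r ≤ dl r * (2:ℝ) ^ MM (r+1) := by
    rw [div_le_iff₀ hδ] at h2M; linarith [h2M]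
  have hinv : ww (r+1) = ((2:ℝ) ^ MM (r+1))⁻¹ := rfl
  rw [hinv]
  calc 4 * AA r * ((2:ℝ) ^ MM (r+1))⁻¹
      ≤ dl r * (2:ℝ) ^ MM (r+1) * ((2:ℝ) ^ MM (r+1))⁻¹ :=
        mul_le_mul_of_nonneg_right h4 (by positivity)
    _ = dl r := by field_simp

/-! ### Dyadic anchors -/

noncomputable def anch (r : ℕ) (t : ℝ) : ℝ := (⌊t * 2 ^ MM r⌋ : ℝ) * ww r

lemma anch_le (r : ℕ) (t : ℝ) : anch r t ≤ t := by
  have hw := ww_pos r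
  have h := Int.floor_le (t * 2 ^ MM r)
  have := mul_le_mul_of_nonneg_right h hw.le
  calc anch r t = (⌊t * 2 ^ MM r⌋ : ℝ) * ww r := rfl
    _ ≤ t * 2 ^ MM r * ww r := this
    _ = t * ((2:ℝ) ^ MM r * ww r) := by ring
    _ = t := by rw [two_pow_MM_mul_ww]; ring

lemma sub_anch_lt (r : ℕ) (t : ℝ) : t - anch r t < ww r := by
  have hw := ww_pos r
  have h := Int.lt_floor_add_one (t * 2 ^ MM r)
  have := mul_lt_mul_of_pos_right h hw
  have h2 : t * 2 ^ MM r * ww r = t := by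
    rw [mul_assoc, two_pow_MM_mul_ww]; ring
  rw [h2, add_mul, one_mul] at this
  unfold anch; linarith

lemma anch_sub_nonneg (r : ℕ) (t : ℝ) : 0 ≤ t - anch r t :=
  sub_nonneg.2 (anch_le r t)

lemma anch_grid (r : ℕ) (z : ℤ) : anch r ((z:ℝ) * ww r) = (z:ℝ) * ww r := by
  have h : (z:ℝ) * ww r * 2 ^ MM r = (z:ℝ) := by
    rw [mul_assoc, mul_comm (ww r), two_pow_MM_mul_ww]; ring
  unfold anch
  rw [h, Int.floor_intCast]

lemma anch_idem (r : ℕ) (t : ℝ) : anch r (anch r t) = anch r t :=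
  anch_grid r ⌊t * 2 ^ MM r⌋

/-- Floor of an integer divided by a positive natural. -/
lemma floor_floor_div (x : ℝ) {n : ℕ} (hn : 0 < n) :
    ⌊(⌊x⌋ : ℝ) / (n:ℝ)⌋ = ⌊x / (n:ℝ)⌋ := by
  have hn' : (0:ℝ) < (n:ℝ) := by exact_mod_cast hn
  have hnz : ((n:ℤ) : ℝ) = (n:ℝ) := by push_cast; ring
  set q : ℤ := ⌊x⌋ / (n:ℤ) with hq
  have hmod : (n:ℤ) * q + ⌊x⌋ % (n:ℤ) = ⌊x⌋ := Int.mul_ediv_add_emod ⌊x⌋ n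
  have hr0 : 0 ≤ ⌊x⌋ % (n:ℤ) := Int.emod_nonneg _ (by exact_mod_cast hn.ne')
  have hr1 : ⌊x⌋ % (n:ℤ) < (n:ℤ) := Int.emod_lt_of_pos _ (by exact_mod_cast hn)
  have hfl : ((⌊x⌋:ℝ)) = (n:ℝ) * (q:ℝ) + ((⌊x⌋ % (n:ℤ) : ℤ) : ℝ) := by
    rw [← hnz]; exact_mod_cast hmod.symm
  have hxl : (⌊x⌋:ℝ) ≤ x := Int.floor_le x
  have hxu : x < (⌊x⌋:ℝ) + 1 := Int.lt_floor_add_one x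
  have hrr0 : (0:ℝ) ≤ ((⌊x⌋ % (n:ℤ) : ℤ) : ℝ) := by exact_mod_cast hr0
  have hrr1 : ((⌊x⌋ % (n:ℤ) : ℤ) : ℝ) ≤ (n:ℝ) - 1 := by
    have : ⌊x⌋ % (n:ℤ) ≤ (n:ℤ) - 1 := by omega
    calc ((⌊x⌋ % (n:ℤ) : ℤ) : ℝ) ≤ (((n:ℤ) - 1 : ℤ) : ℝ) := by exact_mod_cast this
      _ = (n:ℝ) - 1 := by push_cast; ring
  have h1 : ⌊(⌊x⌋ : ℝ) / (n:ℝ)⌋ = q := by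
    rw [Int.floor_eq_iff]
    constructor
    · rw [le_div_iff₀ hn']; nlinarith
    · rw [div_lt_iff₀ hn']; push_cast; nlinarith
  have h2 : ⌊x / (n:ℝ)⌋ = q := by
    rw [Int.floor_eq_iff]
    constructor
    · rw [le_div_iff₀ hn']; nlinarith
    · rw [div_lt_iff₀ hn']; push_cast; nlinarith
  rw [h1, h2]

lemma anch_anch (r : ℕ) (t : ℝ) : anch r (anch (r+1) t) = anch r t := by
  have hM : MM r ≤ MM (r+1) := MM_le_succ r
  set D : ℕ := MM (r+1) - MM r with hD
  have hMD : MM (r+1) = MM r + D := by omega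
  have hpow : (2:ℝ) ^ MM (r+1) = (2:ℝ) ^ MM r * (2:ℝ) ^ D := by
    rw [hMD, pow_add]
  have hkey : anch (r+1) t * 2 ^ MM r = (⌊t * 2 ^ MM (r+1)⌋ : ℝ) / ((2^D : ℕ) : ℝ) := by
    unfold anch ww
    rw [hpow]
    push_cast
    have h2 : (2:ℝ) ^ D ≠ 0 := by positivity
    have h3 : (2:ℝ) ^ MM r ≠ 0 := by positivity
    field_simp
    try ring
  have hx : t * 2 ^ MM (r+1) / ((2^D : ℕ) : ℝ) = t * 2 ^ MM r := by
    rw [hpow]; push_cast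
    have h2 : (2:ℝ) ^ D ≠ 0 := by positivity
    field_simp
    try ring
  have hfl : ⌊anch (r+1) t * 2 ^ MM r⌋ = ⌊t * 2 ^ MM r⌋ := by
    rw [hkey, floor_floor_div _ (Nat.pow_pos (n := D) (by norm_num) : 0 < 2^D), hx]
  show (⌊anch (r+1) t * 2 ^ MM r⌋ : ℝ) * ww r = (⌊t * 2 ^ MM r⌋ : ℝ) * ww r
  rw [hfl]

/-! ### The nested tube construction -/

noncomputable def uu : ℕ → ℝ → ℝ
  | 0, _ => 2
  | r + 1, t =>
      -(sl (r + 1)) * t +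
        dl r * ((⌈(uu r (anch (r + 1) t) + sl (r + 1) * anch (r + 1) t) / dl r⌉ : ℤ) + 1)

lemma uu_succ (r : ℕ) (t : ℝ) :
    uu (r+1) t = -(sl (r + 1)) * t +
      dl r * ((⌈(uu r (anch (r + 1) t) + sl (r + 1) * anch (r + 1) t) / dl r⌉ : ℤ) + 1) := by
  rfl

lemma uu_piece (r : ℕ) {t t' : ℝ} (h : anch (r+1) t = anch (r+1) t') :
    uu (r+1) t + sl (r+1) * t = uu (r+1) t' + sl (r+1) * t' := by
  rw [uu_succ, uu_succ, h]; ring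

lemma uu_slope : ∀ (r : ℕ) (t : ℝ),
    uu r t - uu r (anch (r+1) t) = -(sl r) * (t - anch (r+1) t)
  | 0, t => by simp [uu, sl]
  | (ρ+1), t => by
      have h := uu_piece ρ (t := anch (ρ+2) t) (t' := t) (anch_anch (ρ+1) t)
      linarith [h]

lemma nest (r : ℕ) (t : ℝ) :
    uu r t ≤ uu (r+1) t ∧ uu (r+1) t + dl' (r+1) ≤ uu r t + dl' r := by
  have hδ : 0 < dl r := dl_pos r
  have h4 : dl' r = 4 * dl r := by unfold dl; ring
  set σ := sl (r+1) with hσ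
  set a := anch (r+1) t with ha
  set xa := uu r a + σ * a with hxa
  set x := uu r t + σ * t with hx
  have h1 : xa / dl r ≤ (⌈xa / dl r⌉ : ℝ) := Int.le_ceil _
  have h1' : xa ≤ (⌈xa / dl r⌉ : ℝ) * dl r := by
    rw [div_le_iff₀ hδ] at h1; exact h1
  have h2 : (⌈xa / dl r⌉ : ℝ) < xa / dl r + 1 := Int.ceil_lt_add_one _
  have h2' : (⌈xa / dl r⌉ : ℝ) * dl r < xa + dl r := by
    have := mul_lt_mul_of_pos_right h2 hδ
    rw [add_mul, one_mul, div_mul_cancel₀ _ hδ.ne'] at this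
    exact this
  have hslope : uu r t - uu r a = -(sl r) * (t - a) := uu_slope r t
  have habs : |x - xa| ≤ dl r / 4 := by
    have hxx : x - xa = (σ - sl r) * (t - a) := by
      rw [hx, hxa]; linear_combination hslope
    rw [hxx, abs_mul]
    have hb1 : |σ - sl r| ≤ AA r := by
      have := abs_sub (sl (r+1)) (sl r)
      unfold AA; rw [hσ]; linarith
    have hb2 : |t - a| ≤ ww (r+1) := by
      rw [ha, abs_of_nonneg (anch_sub_nonneg (r+1) t)]
      exact (sub_anch_lt (r+1) t).le
    have hb3 := hww r
    have hwp := ww_pos (r+1)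
    have hAp := AA_pos r
    calc |σ - sl r| * |t - a| ≤ AA r * ww (r+1) :=
          mul_le_mul hb1 hb2 (abs_nonneg _) hAp.le
      _ ≤ dl r / 4 := by linarith
  have huu : uu (r+1) t = -σ * t + dl r * ((⌈xa / dl r⌉ : ℝ) + 1) := by
    rw [uu_succ]; try rw [hσ, hxa, ha]; try push_cast; try ring
  rw [abs_le] at habs
  have hd' : dl' (r+1) ≤ dl r := dl'_succ_le_dl r
  constructor
  · rw [huu]
    have : uu r t = x - σ * t := by rw [hx]; ring
    rw [this]; nlinarith [habs.1, habs.2, h1', h2']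
  · rw [huu, h4]
    have : uu r t = x - σ * t := by rw [hx]; ring
    rw [this]; nlinarith [habs.1, habs.2, h1', h2']

lemma uu_mono (t : ℝ) : Monotone fun r => uu r t :=
  monotone_nat_of_le_succ fun r => (nest r t).1

lemma uu_anti (t : ℝ) : Antitone fun r => uu r t + dl' r :=
  antitone_nat_of_succ_le fun r => (nest r t).2

lemma uu_upper (r r' : ℕ) (t : ℝ) : uu r' t ≤ uu r t + dl' r := by
  rcases le_total r' r with h | h
  · have := uu_mono t h
    have hd := dl'_pos r
    simp only at this
    linarith
  · have := uu_anti t h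
    have hd := dl'_pos r'
    simp only at this
    linarith

noncomputable def Hf (t : ℝ) : ℝ := ⨆ r, uu r t

lemma Hf_tube (r : ℕ) (t : ℝ) : uu r t ≤ Hf t ∧ Hf t ≤ uu r t + dl' r := by
  have hbdd : BddAbove (Set.range fun r' => uu r' t) := by
    refine ⟨uu 0 t + dl' 0, ?_⟩
    rintro y ⟨r', rfl⟩
    exact uu_upper 0 r' t
  constructor
  · exact le_ciSup hbdd r
  · exact ciSup_le fun r' => uu_upper r r' t

lemma Hf_ge_two (t : ℝ) : 2 ≤ Hf t := (Hf_tube 0 t).1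

/-! ### Good rounds -/

lemma sl_pair (i m : ℕ) : sl (Nat.pair i m + 1) = ((Denumerable.ofNat ℚ i : ℚ) : ℝ) := by
  simp only [sl, Nat.unpair_pair]

lemma eps_pair (i m : ℕ) : eps (Nat.pair i m) = 1 / ((m:ℝ)+1) := by
  simp only [eps, Nat.unpair_pair]

lemma good_round (lam : ℝ) (m : ℕ) :
    ∃ k : ℕ, |lam - sl (k+1)| ≤ 1 / ((m:ℝ)+1) ∧ eps k = 1 / ((m:ℝ)+1) := by
  have hm : (0:ℝ) < 1 / ((m:ℝ)+1) := by positivity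
  obtain ⟨q, hq1, hq2⟩ := exists_rat_btwn (show lam < lam + 1/((m:ℝ)+1) by linarith)
  obtain ⟨i, hi⟩ : ∃ i, (Denumerable.ofNat ℚ i) = q :=
    ⟨_, Denumerable.ofNat_encode q⟩
  refine ⟨Nat.pair i m, ?_, eps_pair _ m⟩
  rw [sl_pair, hi, abs_le]
  constructor <;> linarith

/-! ### The planar null set -/

noncomputable def Pf (n : ℤ) (k j : ℕ) (ξ : ℝ) : ℝ :=
  uu (k+1) ((j:ℝ) * ww (k+1)) + 2*ξ*((j:ℝ) * ww (k+1)) + 2*(n:ℝ)*ξ - ξ^2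
    - |2*ξ - sl (k+1)| * ww (k+1)

noncomputable def Qf (n : ℤ) (k j : ℕ) (ξ : ℝ) : ℝ :=
  Pf n k j ξ + (2 * |2*ξ - sl (k+1)| * ww (k+1) + dl' (k+1))

noncomputable def Tset (n : ℤ) (k : ℕ) : Set (ℝ × ℝ) :=
  ⋃ j ∈ Finset.range (2 ^ MM (k+1)),
    {p : ℝ × ℝ | Pf n k j p.1 ≤ p.2^2 ∧ p.2^2 ≤ Qf n k j p.1}

noncomputable def Sset (n : ℤ) : Set (ℝ × ℝ) := ⋂ k, Tset n k

noncomputable def SS : Set (ℝ × ℝ) := ⋃ n : ℤ, Sset n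

lemma Pf_continuous (n : ℤ) (k j : ℕ) : Continuous fun ξ : ℝ => Pf n k j ξ := by
  unfold Pf; fun_prop

lemma Qf_continuous (n : ℤ) (k j : ℕ) : Continuous fun ξ : ℝ => Qf n k j ξ := by
  unfold Qf Pf; fun_prop

lemma Tset_meas (n : ℤ) (k : ℕ) : MeasurableSet (Tset n k) := by
  apply Finset.measurableSet_biUnion
  intro j _
  have h1 : IsClosed {p : ℝ × ℝ | Pf n k j p.1 ≤ p.2^2} :=
    isClosed_le ((Pf_continuous n k j).comp continuous_fst)
      ((continuous_snd.pow 2 : Continuous fun p : ℝ × ℝ => p.2^2))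
  have h2 : IsClosed {p : ℝ × ℝ | p.2^2 ≤ Qf n k j p.1} :=
    isClosed_le ((continuous_snd.pow 2 : Continuous fun p : ℝ × ℝ => p.2^2))
      ((Qf_continuous n k j).comp continuous_fst)
  exact ((h1.inter h2).measurableSet)

lemma Sset_meas (n : ℤ) : MeasurableSet (Sset n) :=
  MeasurableSet.iInter fun k => Tset_meas n k

/-- Any point of a circle with centre `(n + s, 0)` and the prescribed radius
lies in every `Tset n k`. -/
lemma mem_Tset {n : ℤ} (k : ℕ) {s ξ y : ℝ} (hs0 : 0 ≤ s) (hs1 : s < 1)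
    (hy : y^2 = Hf s + 2*(n:ℝ)*ξ + 2*s*ξ - ξ^2) :
    (ξ, y) ∈ Tset n k := by
  have hw : 0 < ww (k+1) := ww_pos (k+1)
  set σ := sl (k+1) with hσ
  set a := anch (k+1) s with ha
  have hx0 : (0:ℝ) ≤ s * 2 ^ MM (k+1) := by positivity
  have hfl0 : 0 ≤ ⌊s * 2 ^ MM (k+1)⌋ := Int.floor_nonneg.2 hx0
  set j : ℕ := (⌊s * 2 ^ MM (k+1)⌋).toNat with hj
  have hjcast : ((j:ℕ) : ℝ) = ((⌊s * 2 ^ MM (k+1)⌋ : ℤ) : ℝ) := by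
    rw [hj]; exact_mod_cast Int.toNat_of_nonneg hfl0
  have haj : a = (j:ℝ) * ww (k+1) := by
    rw [ha]; unfold anch; rw [hjcast]
  have hjlt : j < 2 ^ MM (k+1) := by
    have hlt : ⌊s * 2 ^ MM (k+1)⌋ < ((2 ^ MM (k+1) : ℕ) : ℤ) := by
      apply Int.floor_lt.2
      push_cast
      have : (0:ℝ) < (2:ℝ) ^ MM (k+1) := by positivity
      nlinarith
    have h2 : ((j:ℕ) : ℤ) < ((2 ^ MM (k+1) : ℕ) : ℤ) := by
      rw [hj, Int.toNat_of_nonneg hfl0]; exact hlt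
    exact_mod_cast h2
  apply Set.mem_biUnion (Finset.mem_range.2 hjlt)
  have h0a : 0 ≤ s - a := by rw [ha]; exact anch_sub_nonneg (k+1) s
  have h1a : s - a < ww (k+1) := by rw [ha]; exact sub_anch_lt (k+1) s
  have htube := Hf_tube (k+1) s
  have haff : uu (k+1) a + σ * a = uu (k+1) s + σ * s := by
    rw [hσ, ha]; exact uu_piece k (anch_idem (k+1) s)
  have habs : |(2*ξ - σ) * (s - a)| ≤ |2*ξ - σ| * ww (k+1) := by
    rw [abs_mul, abs_of_nonneg h0a]
    exact mul_le_mul_of_nonneg_left h1a.le (abs_nonneg _)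
  have hkey : y^2 = uu (k+1) ((j:ℝ) * ww (k+1)) + 2*ξ*((j:ℝ) * ww (k+1)) + 2*(n:ℝ)*ξ - ξ^2
      + ((Hf s - uu (k+1) s) + (2*ξ - σ) * (s - a)) := by
    rw [← haj, hy]; linear_combination -haff
  have hneg := neg_abs_le ((2*ξ - σ) * (s - a))
  have hpos := le_abs_self ((2*ξ - σ) * (s - a))
  constructor
  · show Pf n k j ξ ≤ y^2
    unfold Pf
    rw [hkey]
    have := htube.1
    rw [← hσ]
    linarith
  · show y^2 ≤ Qf n k j ξ
    unfold Qf Pf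
    rw [hkey]
    have := htube.2
    rw [← hσ]
    linarith

/-! ### Slice estimates -/

lemma Icc_sqrt_bound {P Q η L : ℝ} (hη : 0 < η) (hL : Q - P ≤ L) :
    volume (Set.Icc (Real.sqrt (max P (η^2))) (Real.sqrt Q)) ≤ ENNReal.ofReal (L / (2*η)) := by
  rw [Real.volume_Icc]
  rcases le_or_gt Q (max P (η^2)) with h | h
  · have : Real.sqrt Q ≤ Real.sqrt (max P (η^2)) := Real.sqrt_le_sqrt h
    rw [ENNReal.ofReal_eq_zero.2 (by linarith)]
    exact zero_le
  · have h0 : (0:ℝ) ≤ max P (η^2) := le_trans (sq_nonneg η) (le_max_right _ _)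
    have hQ0 : (0:ℝ) ≤ Q := h0.trans h.le
    have hsm : η ≤ Real.sqrt (max P (η^2)) := by
      have h' := Real.sqrt_le_sqrt (le_max_right P (η^2))
      rwa [Real.sqrt_sq hη.le] at h'
    have hsq : Real.sqrt (max P (η^2)) ≤ Real.sqrt Q := Real.sqrt_le_sqrt h.le
    apply ENNReal.ofReal_le_ofReal
    have hmul : (Real.sqrt Q - Real.sqrt (max P (η^2))) * (Real.sqrt Q + Real.sqrt (max P (η^2)))
        = Q - max P (η^2) := by
      have e1 : Real.sqrt Q ^ 2 = Q := Real.sq_sqrt hQ0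
      have e2 : Real.sqrt (max P (η^2)) ^ 2 = max P (η^2) := Real.sq_sqrt h0
      nlinarith [e1, e2]
    have hsum : 2*η ≤ Real.sqrt Q + Real.sqrt (max P (η^2)) := by linarith
    have hnn : 0 ≤ Real.sqrt Q - Real.sqrt (max P (η^2)) := by linarith
    have hPm : P ≤ max P (η^2) := le_max_left _ _
    rw [le_div_iff₀ (by linarith : (0:ℝ) < 2*η)]
    nlinarith [hmul, hsum, hnn]

lemma sq_mem_cover {P Q η y : ℝ} (hη : 0 < η) (h1 : P ≤ y^2) (h2 : y^2 ≤ Q) :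
    y ∈ Set.Icc (-η) η ∪
      (Set.Icc (Real.sqrt (max P (η^2))) (Real.sqrt Q) ∪
       Set.Icc (-(Real.sqrt Q)) (-(Real.sqrt (max P (η^2))))) := by
  rcases le_or_gt |y| η with hab | hab
  · left; rw [Set.mem_Icc]; exact abs_le.1 hab
  · right
    have hysq : η^2 < y^2 := by
      have : η^2 < |y|^2 := by nlinarith [hab, hη, abs_nonneg y]
      rwa [sq_abs] at this
    have hmax : max P (η^2) ≤ y^2 := max_le h1 hysq.le
    have hQ0 : (0:ℝ) ≤ Q := le_trans (sq_nonneg y) h2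
    have hup : |y| ≤ Real.sqrt Q := by
      rw [← Real.sqrt_sq_eq_abs]
      exact Real.sqrt_le_sqrt h2
    have hlo : Real.sqrt (max P (η^2)) ≤ |y| := by
      rw [← Real.sqrt_sq_eq_abs]
      exact Real.sqrt_le_sqrt hmax
    rcases le_or_gt 0 y with hy | hy
    · left; rw [Set.mem_Icc]
      rw [abs_of_nonneg hy] at hup hlo
      exact ⟨hlo, hup⟩
    · right; rw [Set.mem_Icc]
      rw [abs_of_neg hy] at hup hlo
      constructor <;> linarith

lemma slice_bound (n : ℤ) (ξ : ℝ) (m : ℕ) :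
    volume {y : ℝ | (ξ, y) ∈ Sset n} ≤ ENNReal.ofReal (5 * Real.sqrt (1/((m:ℝ)+1))) := by
  set ε : ℝ := 1/((m:ℝ)+1) with hε
  have hεpos : 0 < ε := by positivity
  obtain ⟨k, hk1, hk2⟩ := good_round (2*ξ) m
  set η := Real.sqrt ε with hη
  have hηpos : 0 < η := Real.sqrt_pos.2 hεpos
  have hηsq : η^2 = ε := Real.sq_sqrt hεpos.le
  have hw : 0 < ww (k+1) := ww_pos (k+1)
  have hQP : ∀ j : ℕ, Qf n k j ξ - Pf n k j ξ ≤ 3 * ε * ww (k+1) := by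
    intro j
    have h1 : |2*ξ - sl (k+1)| ≤ ε := by rw [hε]; exact hk1
    have h2 : dl' (k+1) ≤ ε * ww (k+1) := by
      rw [hε, ← hk2]; exact dl'_succ_le_epsw k
    have h3 : 2 * |2*ξ - sl (k+1)| * ww (k+1) ≤ 2 * ε * ww (k+1) := by
      have := abs_nonneg (2*ξ - sl (k+1))
      nlinarith
    unfold Qf
    nlinarith
  -- inclusion into the covering family
  have hsub : {y : ℝ | (ξ, y) ∈ Sset n} ⊆
      Set.Icc (-η) η ∪
        ⋃ j ∈ Finset.range (2 ^ MM (k+1)),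
          (Set.Icc (Real.sqrt (max (Pf n k j ξ) (η^2))) (Real.sqrt (Qf n k j ξ)) ∪
           Set.Icc (-(Real.sqrt (Qf n k j ξ))) (-(Real.sqrt (max (Pf n k j ξ) (η^2))))) := by
    intro y hy
    have hyT : (ξ, y) ∈ Tset n k := Set.mem_iInter.1 hy k
    obtain ⟨j, hjmem, hcond⟩ := Set.mem_iUnion₂.1 hyT
    have := sq_mem_cover hηpos hcond.1 hcond.2
    rcases this with h | h
    · exact Or.inl h
    · exact Or.inr (Set.mem_biUnion hjmem h)
  calc volume {y : ℝ | (ξ, y) ∈ Sset n}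
      ≤ volume (Set.Icc (-η) η ∪
        ⋃ j ∈ Finset.range (2 ^ MM (k+1)),
          (Set.Icc (Real.sqrt (max (Pf n k j ξ) (η^2))) (Real.sqrt (Qf n k j ξ)) ∪
           Set.Icc (-(Real.sqrt (Qf n k j ξ))) (-(Real.sqrt (max (Pf n k j ξ) (η^2)))))) :=
        measure_mono hsub
    _ ≤ volume (Set.Icc (-η) η) +
        volume (⋃ j ∈ Finset.range (2 ^ MM (k+1)),
          (Set.Icc (Real.sqrt (max (Pf n k j ξ) (η^2))) (Real.sqrt (Qf n k j ξ)) ∪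
           Set.Icc (-(Real.sqrt (Qf n k j ξ))) (-(Real.sqrt (max (Pf n k j ξ) (η^2)))))) :=
        measure_union_le _ _
    _ ≤ ENNReal.ofReal (2*η) +
        ∑ j ∈ Finset.range (2 ^ MM (k+1)),
          (ENNReal.ofReal (3 * ε * ww (k+1) / (2*η)) + ENNReal.ofReal (3 * ε * ww (k+1) / (2*η))) := by
        gcongr
        · rw [Real.volume_Icc]
          apply ENNReal.ofReal_le_ofReal; linarith
        · calc volume (⋃ j ∈ Finset.range (2 ^ MM (k+1)),
              (Set.Icc (Real.sqrt (max (Pf n k j ξ) (η^2))) (Real.sqrt (Qf n k j ξ)) ∪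
               Set.Icc (-(Real.sqrt (Qf n k j ξ))) (-(Real.sqrt (max (Pf n k j ξ) (η^2)))))) ≤
              ∑ j ∈ Finset.range (2 ^ MM (k+1)),
                volume (Set.Icc (Real.sqrt (max (Pf n k j ξ) (η^2))) (Real.sqrt (Qf n k j ξ)) ∪
                 Set.Icc (-(Real.sqrt (Qf n k j ξ))) (-(Real.sqrt (max (Pf n k j ξ) (η^2)))))
              := measure_biUnion_finset_le _ _
          _ ≤ _ := by
              apply Finset.sum_le_sum
              intro j _
              calc volume (Set.Icc (Real.sqrt (max (Pf n k j ξ) (η^2))) (Real.sqrt (Qf n k j ξ)) ∪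
                   Set.Icc (-(Real.sqrt (Qf n k j ξ))) (-(Real.sqrt (max (Pf n k j ξ) (η^2)))))
                  ≤ volume (Set.Icc (Real.sqrt (max (Pf n k j ξ) (η^2))) (Real.sqrt (Qf n k j ξ))) +
                    volume (Set.Icc (-(Real.sqrt (Qf n k j ξ))) (-(Real.sqrt (max (Pf n k j ξ) (η^2)))))
                  := measure_union_le _ _
                _ ≤ _ := by
                    gcongr
                    · exact Icc_sqrt_bound hηpos (hQP j)
                    · rw [Real.volume_Icc]
                      have := Icc_sqrt_bound hηpos (hQP j)
                      rw [Real.volume_Icc] at this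
                      calc ENNReal.ofReal (-(Real.sqrt (max (Pf n k j ξ) (η^2))) - -(Real.sqrt (Qf n k j ξ)))
                          = ENNReal.ofReal (Real.sqrt (Qf n k j ξ) - Real.sqrt (max (Pf n k j ξ) (η^2))) := by
                            ring_nf
                        _ ≤ _ := this
    _ ≤ ENNReal.ofReal (5 * η) := by
        rw [Finset.sum_const, Finset.card_range]
        have hcomb : (ENNReal.ofReal (3 * ε * ww (k+1) / (2*η)) + ENNReal.ofReal (3 * ε * ww (k+1) / (2*η)))
            = ENNReal.ofReal (3 * ε * ww (k+1) / η) := by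
          rw [← ENNReal.ofReal_add (by positivity) (by positivity)]
          congr 1
          field_simp
          ring
        rw [hcomb, nsmul_eq_mul]
        have hcast : ((2 ^ MM (k+1) : ℕ) : ENNReal) = ENNReal.ofReal ((2:ℝ) ^ MM (k+1)) := by
          rw [← ENNReal.ofReal_natCast]
          congr 1
          push_cast; ring
        rw [hcast, ← ENNReal.ofReal_mul (by positivity)]
        rw [← ENNReal.ofReal_add (by positivity) (by positivity)]
        apply ENNReal.ofReal_le_ofReal
        have hmulw : (2:ℝ) ^ MM (k+1) * (3 * ε * ww (k+1) / η) = 3 * ε / η := by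
          rw [show (2:ℝ) ^ MM (k+1) * (3 * ε * ww (k+1) / η) =
            ((2:ℝ) ^ MM (k+1) * ww (k+1)) * (3 * ε / η) by ring, two_pow_MM_mul_ww]
          ring
        rw [hmulw]
        have : 3 * ε / η = 3 * η := by
          rw [← hηsq]; field_simp
        rw [this]
        linarith

lemma slice_null (n : ℤ) (ξ : ℝ) : volume {y : ℝ | (ξ, y) ∈ Sset n} = 0 := by
  have htd : Filter.Tendsto (fun m : ℕ => ENNReal.ofReal (5 * Real.sqrt (1/((m:ℝ)+1))))
      Filter.atTop (nhds 0) := by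
    have h0 : Filter.Tendsto (fun m : ℕ => 1/((m:ℝ)+1)) Filter.atTop (nhds 0) :=
      tendsto_one_div_add_atTop_nhds_zero_nat
    have h1 : Filter.Tendsto (fun m : ℕ => Real.sqrt (1/((m:ℝ)+1))) Filter.atTop
        (nhds (Real.sqrt 0)) := (Real.continuous_sqrt.tendsto 0).comp h0
    rw [Real.sqrt_zero] at h1
    have h2 : Filter.Tendsto (fun m : ℕ => 5 * Real.sqrt (1/((m:ℝ)+1))) Filter.atTop (nhds 0) := by
      have := h1.const_mul (5:ℝ)
      simpa using this
    have := ENNReal.tendsto_ofReal h2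
    simpa using this
  have hle : volume {y : ℝ | (ξ, y) ∈ Sset n} ≤ 0 :=
    ge_of_tendsto htd (Filter.Eventually.of_forall fun m => slice_bound n ξ m)
  exact le_antisymm hle zero_le

lemma Sset_null (n : ℤ) : volume (Sset n) = 0 := by
  rw [MeasureTheory.Measure.volume_eq_prod]
  rw [MeasureTheory.Measure.measure_prod_null (Sset_meas n)]
  filter_upwards with ξ
  exact slice_null n ξ

lemma SS_meas : MeasurableSet SS :=
  MeasurableSet.iUnion fun n => Sset_meas n

lemma SS_null : volume SS = 0 :=
  measure_iUnion_null fun n => Sset_null n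

end Talagrand

open Talagrand in
/-- **Talagrand's example.** There is a planar set of Lebesgue measure zero containing
a circle centered at every point of a straight line. -/
theorem talagrand_example :
    ∃ B : Set (EuclideanSpace ℝ (Fin 2)), volume B = 0 ∧
      ∀ t : ℝ, ∃ r > (0 : ℝ),
        Metric.sphere ((WithLp.equiv 2 (Fin 2 → ℝ)).symm ![t, 0]) r ⊆ B := by
  classical
  have hmp := (MeasureTheory.volume_preserving_finTwoArrow ℝ).comp
    (EuclideanSpace.volume_preserving_symm_measurableEquiv_toLp (Fin 2))
  refine ⟨(⇑(MeasurableEquiv.finTwoArrow) ∘ ⇑(MeasurableEquiv.toLp 2 (Fin 2 → ℝ)).symm) ⁻¹' SS,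
    ?_, ?_⟩
  · rw [hmp.measure_preimage SS_meas.nullMeasurableSet]
    exact SS_null
  · intro t
    set n : ℤ := ⌊t⌋ with hn
    set s : ℝ := Int.fract t with hs
    have hs0 : 0 ≤ s := Int.fract_nonneg t
    have hs1 : s < 1 := Int.fract_lt_one t
    have hH2 : 2 ≤ Hf s := Hf_ge_two s
    have hRpos : 0 < Hf s + t^2 := by nlinarith [sq_nonneg t]
    refine ⟨Real.sqrt (Hf s + t^2), Real.sqrt_pos.2 hRpos, ?_⟩
    intro z hz
    have hzd : dist z ((WithLp.equiv 2 (Fin 2 → ℝ)).symm ![t, 0]) = Real.sqrt (Hf s + t^2) :=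
      mem_sphere.1 hz
    set c := ((WithLp.equiv 2 (Fin 2 → ℝ)).symm ![t, 0]) with hc
    have hc0 : c 0 = t := by
      rw [hc, WithLp.equiv_symm_apply, PiLp.toLp_apply]
      simp
    have hc1 : c 1 = 0 := by
      rw [hc, WithLp.equiv_symm_apply, PiLp.toLp_apply]
      simp
    have hsum : (z 0 - t)^2 + (z 1)^2 = Hf s + t^2 := by
      have h1 : dist z c ^ 2 = Real.sqrt (Hf s + t^2) ^ 2 := by rw [hzd]
      rw [EuclideanSpace.dist_eq] at h1
      rw [Real.sq_sqrt (by positivity : (0:ℝ) ≤ ∑ i, dist (z i) (c i) ^ 2),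
        Real.sq_sqrt hRpos.le] at h1
      rw [Fin.sum_univ_two] at h1
      rw [Real.dist_eq, Real.dist_eq, sq_abs, sq_abs, hc0, hc1] at h1
      simpa using h1
    have ht : (n:ℝ) + s = t := by
      rw [hn, hs]; exact Int.floor_add_fract t
    have hy : (z 1)^2 = Hf s + 2*(n:ℝ)*(z 0) + 2*s*(z 0) - (z 0)^2 := by
      have hsum' : (z 0 - ((n:ℝ) + s))^2 + (z 1)^2 = Hf s + ((n:ℝ) + s)^2 := by
        rw [ht]; exact hsum
      linear_combination hsum'
    show (⇑(MeasurableEquiv.finTwoArrow) ∘ ⇑(MeasurableEquiv.toLp 2 (Fin 2 → ℝ)).symm) z ∈ SS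
    have hFz : (⇑(MeasurableEquiv.finTwoArrow) ∘ ⇑(MeasurableEquiv.toLp 2 (Fin 2 → ℝ)).symm) z
        = (z 0, z 1) := rfl
    rw [hFz]
    exact Set.mem_iUnion.2 ⟨n, Set.mem_iInter.2 fun k => mem_Tset k hs0 hs1 hy⟩
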